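/- For every real number ε > 0, the function g_ε(t) = t + i·ε·t^2 on [0,1] belongs to W_1: every isometry S : ℂ → ℂ with S(g_ε([0,1])) = g_ε([0,1]) is the identity map. -/

import Mathlib

/-- `f ∈ C([0,1])` is continuously differentiable on `[0,1]`. -/
def IsC1 (f : C(unitInterval, ℂ)) : Prop :=
  ∃ g : ℝ → ℂ, ContDiffOn ℝ 1 g (Set.Icc 0 1) ∧ ∀ t : unitInterval, f t = g t

/-- The set `W₁` of members `f` of `A₁` such that the only surjective isometry of `ℂ` leaving
the range of `f` invariant is the identity. -/
def Wset (A1 : Submodule ℂ C(unitInterval, ℂ)) : Set C(unitInterval, ℂ) :=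
  {f | f ∈ A1 ∧ ∀ S : ℂ → ℂ, Isometry S → Function.Surjective S →
    S '' Set.range ⇑f = Set.range ⇑f → S = id}

/-- The function `g_ε(t) = t + i·ε·t²` on `[0,1]`. -/
noncomputable def gEx (ε : ℝ) : C(unitInterval, ℂ) :=
  ⟨fun t => ((t : ℝ) : ℂ) + Complex.I * (ε : ℂ) * ((t : ℝ) : ℂ) ^ 2, by fun_prop⟩

lemma iso_form (S : ℂ → ℂ) (hS : Isometry S) (hsurj : Function.Surjective S) :
    ∃ a : ℂ, (∀ z, S z = S 0 + a * z) ∨ (∀ z, S z = S 0 + a * (starRingEnd ℂ) z) := by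
  let e : ℂ ≃ᵢ ℂ := ⟨Equiv.ofBijective S ⟨hS.injective, hsurj⟩, hS⟩
  have he : ∀ z, e z = S z := fun z => rfl
  obtain ⟨a, h | h⟩ := linear_isometry_complex e.toRealLinearIsometryEquiv
  · refine ⟨a, Or.inl fun z => ?_⟩
    have := e.toRealLinearIsometryEquiv_apply z
    rw [h, rotation_apply] at this
    rw [he, he] at this
    linear_combination -this
  · refine ⟨a, Or.inr fun z => ?_⟩
    have := e.toRealLinearIsometryEquiv_apply z
    rw [h] at this
    simp only [LinearIsometryEquiv.trans_apply, rotation_apply, Complex.conjLIE_apply] at this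
    rw [he, he] at this
    linear_combination -this

lemma mem_range_gEx {ε : ℝ} {z : ℂ} :
    z ∈ Set.range ⇑(gEx ε) ↔
      ∃ t : ℝ, 0 ≤ t ∧ t ≤ 1 ∧ z = (t:ℂ) + Complex.I * ε * (t:ℂ)^2 := by
  constructor
  · rintro ⟨t, rfl⟩; exact ⟨t, t.2.1, t.2.2, rfl⟩
  · rintro ⟨t, h0, h1, rfl⟩; exact ⟨⟨t, h0, h1⟩, rfl⟩

lemma diam {ε s t : ℝ} (hε : 0 < ε) (hs0 : 0 ≤ s) (hs1 : s ≤ 1) (ht0 : 0 ≤ t) (ht1 : t ≤ 1)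
    (h : Complex.normSq (((s:ℂ) + Complex.I*ε*(s:ℂ)^2) - ((t:ℂ) + Complex.I*ε*(t:ℂ)^2))
      = 1 + ε^2) :
    (s = 0 ∧ t = 1) ∨ (s = 1 ∧ t = 0) := by
  have h' : (s-t)^2 + ε^2*(s^2-t^2)^2 = 1 + ε^2 := by
    rw [← h]; simp [Complex.normSq_apply, ← Complex.ofReal_pow]; ring
  have hs2 : s^2 ≤ 1 := by nlinarith
  have ht2 : t^2 ≤ 1 := by nlinarith
  have hA : (s-t)^2 ≤ 1 := by
    nlinarith [mul_nonneg (by linarith : (0:ℝ) ≤ 1 - (s-t)) (by linarith : (0:ℝ) ≤ 1 + (s-t))]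
  have hB : (s^2-t^2)^2 ≤ 1 := by
    nlinarith [mul_nonneg (by nlinarith : (0:ℝ) ≤ 1 - (s^2-t^2))
      (by nlinarith : (0:ℝ) ≤ 1 + (s^2-t^2))]
  have hε2 : 0 < ε^2 := by positivity
  have hB1 : (s^2-t^2)^2 = 1 := by nlinarith
  have hA1 : (s-t)^2 = 1 := by nlinarith
  have hz : (s - t - 1) * (s - t + 1) = 0 := by nlinarith
  rcases mul_eq_zero.1 hz with h1 | h1
  · right; constructor <;> linarith
  · left; constructor <;> linarith

/-- for every `ε > 0` the function `g_ε(t) = t + i·ε·t²` belongs to `W₁`. -/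
theorem stmt_5 (A1 : Submodule ℂ C(unitInterval, ℂ))
    (hC1 : ∀ f : C(unitInterval, ℂ), IsC1 f → f ∈ A1) :
    ∀ ε : ℝ, 0 < ε → gEx ε ∈ Wset A1 := by
  intro ε hε
  have hcd : ContDiff ℝ 1 fun t : ℝ => (t:ℂ) + Complex.I * ε * (t:ℂ)^2 := by
    have h1 : ContDiff ℝ 1 ((↑) : ℝ → ℂ) := Complex.ofRealCLM.contDiff
    have h2 : ContDiff ℝ 1 fun t : ℝ => ((t:ℂ))^2 := h1.pow 2
    have h3 : ContDiff ℝ 1 fun t : ℝ => Complex.I * ε * ((t:ℂ))^2 := contDiff_const.mul h2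
    exact h1.add h3
  refine ⟨hC1 _ ⟨fun t : ℝ => (t:ℂ) + Complex.I * ε * (t:ℂ)^2, hcd.contDiffOn,
      fun t => rfl⟩, ?_⟩
  intro S hS hsurj hrange
  obtain ⟨a, hform⟩ := iso_form S hS hsurj
  have hK : ∀ z, z ∈ Set.range ⇑(gEx ε) → S z ∈ Set.range ⇑(gEx ε) :=
    fun z hz => hrange ▸ Set.mem_image_of_mem S hz
  set p : ℂ := 1 + Complex.I * ε with hpdef
  set q : ℂ := ((1/2:ℝ):ℂ) + Complex.I * ε * ((1/2:ℝ):ℂ)^2 with hqdef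
  have h0K : (0:ℂ) ∈ Set.range ⇑(gEx ε) :=
    mem_range_gEx.2 ⟨0, le_refl _, zero_le_one, by norm_num⟩
  have hpK : p ∈ Set.range ⇑(gEx ε) :=
    mem_range_gEx.2 ⟨1, zero_le_one, le_refl _, by norm_num [hpdef]⟩
  have hqK : q ∈ Set.range ⇑(gEx ε) :=
    mem_range_gEx.2 ⟨1/2, by norm_num, by norm_num, rfl⟩
  obtain ⟨s, hs0, hs1, hsE⟩ := mem_range_gEx.1 (hK 0 h0K)
  obtain ⟨t, ht0, ht1, htE⟩ := mem_range_gEx.1 (hK p hpK)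
  obtain ⟨u, hu0, hu1, huE⟩ := mem_range_gEx.1 (hK q hqK)
  have hconjpt : ∀ r : ℝ, (starRingEnd ℂ) ((r:ℂ) + Complex.I * ε * (r:ℂ)^2)
      = (r:ℂ) - Complex.I * ε * (r:ℂ)^2 := by
    intro r; simp [← Complex.ofReal_pow, Complex.ext_iff]
  have hconjq : (starRingEnd ℂ) q = ((1/2:ℝ):ℂ) - Complex.I * ε * ((1/2:ℝ):ℂ)^2 := by
    rw [hqdef]; exact hconjpt (1/2)
  have hconjp : (starRingEnd ℂ) p = 1 - Complex.I * ε := by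
    rw [hpdef]; simp [Complex.ext_iff]
  have hp2 : (0:ℝ) < 1 + ε^2 := by positivity
  -- the distance from `S 0` to `S p` is the diameter of the range
  have hns : Complex.normSq (((s:ℂ) + Complex.I*ε*(s:ℂ)^2) - ((t:ℂ) + Complex.I*ε*(t:ℂ)^2))
      = 1 + ε^2 := by
    have hd : dist (S 0) (S p) = dist (0:ℂ) p := hS.dist_eq _ _
    rw [hsE, htE] at hd
    have h2 := congrArg (fun x : ℝ => x^2) hd
    simp only [Complex.dist_eq, Complex.sq_norm] at h2
    rw [h2, hpdef]
    simp [Complex.normSq_apply]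
    ring
  rcases diam hε hs0 hs1 ht0 ht1 hns with ⟨hs, ht⟩ | ⟨hs, ht⟩
  · -- S 0 = 0, S p = p
    have hS0 : S 0 = 0 := by rw [hsE, hs]; norm_num
    have hSp : S p = p := by rw [htE, ht]; norm_num [hpdef]
    rcases hform with h | h
    · -- rotation fixing 0 and p : the identity
      have hp0 : p ≠ 0 := by
        intro hc
        have := congrArg Complex.re hc
        simp [hpdef] at this
      have ha : a = 1 := by
        have h1 := h p
        rw [hS0, hSp] at h1
        have h1' : a * p = 1 * p := by linear_combination -h1
        exact mul_right_cancel₀ hp0 h1'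
      funext z
      simp [h z, hS0, ha]
    · -- reflection fixing 0 and p : impossible
      exfalso
      have h1 := h p
      rw [hS0, hSp, hconjp, hpdef] at h1
      have h2 := h q
      rw [hS0, hconjq, huE] at h2
      have h1re := congrArg Complex.re h1
      have h1im := congrArg Complex.im h1
      have h2re := congrArg Complex.re h2
      have h2im := congrArg Complex.im h2
      simp only [← Complex.ofReal_pow, Complex.add_re, Complex.add_im, Complex.sub_re,
        Complex.sub_im, Complex.mul_re, Complex.mul_im, Complex.I_re, Complex.I_im,
        Complex.ofReal_re, Complex.ofReal_im, Complex.one_re, Complex.one_im,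
        Complex.zero_re, Complex.zero_im] at h1re h1im h2re h2im
      norm_num at h1re h1im h2re h2im
      have hkey : ε*u^2 - ε*u = ε/4 := by
        linear_combination h2im - ε * h2re - (1/2) * h1im + (ε/4) * h1re
      have hkey2 : u^2 - u = 1/4 :=
        mul_left_cancel₀ (ne_of_gt hε) (by linear_combination hkey)
      nlinarith [mul_nonneg hu0 (sub_nonneg.2 hu1)]
  · -- S 0 = p, S p = 0
    exfalso
    have hS0 : S 0 = p := by rw [hsE, hs]; norm_num [hpdef]
    have hSp : S p = 0 := by rw [htE, ht]; norm_num
    rcases hform with h | h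
    · -- the map z ↦ p - z : impossible
      have h1 := h p
      rw [hS0, hSp, hpdef] at h1
      have h2 := h q
      rw [hS0, huE, hpdef, hqdef] at h2
      have h1re := congrArg Complex.re h1
      have h1im := congrArg Complex.im h1
      have h2re := congrArg Complex.re h2
      have h2im := congrArg Complex.im h2
      simp only [← Complex.ofReal_pow, Complex.add_re, Complex.add_im, Complex.sub_re,
        Complex.sub_im, Complex.mul_re, Complex.mul_im, Complex.I_re, Complex.I_im,
        Complex.ofReal_re, Complex.ofReal_im, Complex.one_re, Complex.one_im,
        Complex.zero_re, Complex.zero_im] at h1re h1im h2re h2im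
      norm_num at h1re h1im h2re h2im
      have hB : a.im * (1+ε^2) = 0 := by linear_combination ε * h1re - h1im
      have hA : a.re * (1+ε^2) = -(1+ε^2) := by linear_combination -h1re - ε * h1im
      have hu : u * (1+ε^2) = (1/2) * (1+ε^2) := by
        linear_combination (1+ε^2) * h2re + (1/2) * hA - (ε/4) * hB
      have him : ε*u^2*(1+ε^2) = (3*ε/4)*(1+ε^2) := by
        linear_combination (1+ε^2) * h2im + (ε/4) * hA + (1/2) * hB
      have huu : u = 1/2 := mul_right_cancel₀ (ne_of_gt hp2) hu
      rw [huu] at him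
      nlinarith [mul_pos hε hp2]
    · -- glide reflection : impossible
      have h1 := h p
      rw [hS0, hSp, hconjp, hpdef] at h1
      have h2 := h q
      rw [hS0, hconjq, huE, hpdef] at h2
      have h1re := congrArg Complex.re h1
      have h1im := congrArg Complex.im h1
      have h2re := congrArg Complex.re h2
      have h2im := congrArg Complex.im h2
      simp only [← Complex.ofReal_pow, Complex.add_re, Complex.add_im, Complex.sub_re,
        Complex.sub_im, Complex.mul_re, Complex.mul_im, Complex.I_re, Complex.I_im,
        Complex.ofReal_re, Complex.ofReal_im, Complex.one_re, Complex.one_im,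
        Complex.zero_re, Complex.zero_im] at h1re h1im h2re h2im
      norm_num at h1re h1im h2re h2im
      have hA : a.re * (1+ε^2) = ε^2 - 1 := by linear_combination -h1re + ε * h1im
      have hB : a.im * (1+ε^2) = -2*ε := by linear_combination -ε * h1re - h1im
      have hu : u * (1+ε^2) = 1/2 + ε^2 := by
        linear_combination (1+ε^2) * h2re + (1/2) * hA + (ε/4) * hB
      have him : ε*u^2*(1+ε^2) = ε/4 + 3*ε^3/4 := by
        linear_combination (1+ε^2) * h2im - (ε/4) * hA + (1/2) * hB
      have hu2 : u^2*(1+ε^2) = 1/4 + 3*ε^2/4 :=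
        mul_left_cancel₀ (ne_of_gt hε) (by linear_combination him)
      have h3 : u^2*(1+ε^2)^2 = (1/2+ε^2)^2 := by
        linear_combination (u*(1+ε^2) + (1/2+ε^2)) * hu
      have hfin : ε^4 = 0 := by linear_combination -4*h3 + 4*(1+ε^2)*hu2
      exact absurd hfin (pow_pos hε 4).ne'
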